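/- Let Λ = {(z₀, …, zₘ) ∈ ℝ^{m+1} : z₀ < 0 and zᵢ ≤ 0 for i = 1,…,m}. Suppose rank{a₁−a, …, aₘ−a} = n and m = n. If G(ℝⁿ) ∩ Λ = ∅, then G(ℝⁿ)• ∩ Λ = ∅, where G(x) = (−g(x), g₁(x), …, gₘ(x)) with g(x) = xᵀx − 2aᵀx + θ and gᵢ(x) = xᵀx − 2aᵢᵀx + θᵢ. -/

import Mathlib

open Matrix

/-- The set of convex combinations of pairs of points of `D`. -/
def bullet {V : Type*} [AddCommGroup V] [Module ℝ V] (D : Set V) : Set V :=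
  {x | ∃ u ∈ D, ∃ v ∈ D, ∃ l : ℝ, 0 ≤ l ∧ l ≤ 1 ∧ x = l • u + (1 - l) • v}

theorem stmt12 (n m : ℕ)
    (a : Fin n → ℝ) (aa : Fin m → (Fin n → ℝ)) (θ : ℝ) (θθ : Fin m → ℝ)
    (g : (Fin n → ℝ) → ℝ) (gg : Fin m → (Fin n → ℝ) → ℝ)
    (hg : ∀ x, g x = x ⬝ᵥ x - 2 * (a ⬝ᵥ x) + θ)
    (hgg : ∀ i x, gg i x = x ⬝ᵥ x - 2 * (aa i ⬝ᵥ x) + θθ i)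
    (hrank : Module.finrank ℝ (Submodule.span ℝ (Set.range fun i => aa i - a)) = n)
    (hmn : m = n)
    (Λ : Set (Fin (m + 1) → ℝ))
    (hΛ : Λ = {z | z 0 < 0 ∧ ∀ i : Fin m, z i.succ ≤ 0})
    (G : (Fin n → ℝ) → (Fin (m + 1) → ℝ))
    (hG : ∀ x, G x = Fin.cons (-(g x)) (fun i : Fin m => gg i x))
    (hdisj : Set.range G ∩ Λ = ∅) :
    bullet (Set.range G) ∩ Λ = ∅ := by
  subst hmn
  -- key consequence of hdisj
  have key : ∀ p : Fin m → ℝ, 0 < g p → (∀ i, gg i p ≤ 0) → False := by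
    intro p h1 h2
    have hmem : G p ∈ Set.range G ∩ Λ := by
      refine ⟨⟨p, rfl⟩, ?_⟩
      rw [hΛ, hG]
      refine ⟨by simpa using h1, fun i => by simpa [Fin.cons_succ] using h2 i⟩
    rw [hdisj] at hmem
    exact hmem
  rw [Set.eq_empty_iff_forall_notMem]
  rintro w ⟨⟨u, ⟨x, rfl⟩, v, ⟨y, rfl⟩, l, hl0, hl1, rfl⟩, hwΛ⟩
  rw [hΛ, Set.mem_setOf_eq] at hwΛ
  set z : Fin m → ℝ := l • x + (1 - l) • y with hz
  set C : ℝ := l * (1 - l) * ((x - y) ⬝ᵥ (x - y)) with hCdef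
  -- parallelogram-type identity
  have main : ∀ (b : Fin m → ℝ) (t : ℝ),
      l * (x ⬝ᵥ x - 2 * (b ⬝ᵥ x) + t) + (1 - l) * (y ⬝ᵥ y - 2 * (b ⬝ᵥ y) + t)
        = (z ⬝ᵥ z - 2 * (b ⬝ᵥ z) + t) + C := by
    intro b t
    have e1 : z ⬝ᵥ z = l^2*(x⬝ᵥx) + 2*l*(1-l)*(x⬝ᵥy) + (1-l)^2*(y⬝ᵥy) := by
      rw [hz]
      simp only [dotProduct_add, add_dotProduct, dotProduct_smul, smul_dotProduct, smul_eq_mul,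
        dotProduct_comm y x]
      ring
    have e2 : b ⬝ᵥ z = l*(b⬝ᵥx) + (1-l)*(b⬝ᵥy) := by
      rw [hz]; simp only [dotProduct_add, dotProduct_smul, smul_eq_mul]
    have e3 : (x - y) ⬝ᵥ (x - y) = x⬝ᵥx - 2*(x⬝ᵥy) + y⬝ᵥy := by
      simp only [dotProduct_sub, sub_dotProduct, dotProduct_comm y x]
      ring
    rw [hCdef, e1, e2, e3]; ring
  -- membership in Λ, expressed with g, gg at z
  have hw0 : (l • G x + (1 - l) • G y) 0 = l * (-(g x)) + (1 - l) * (-(g y)) := by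
    simp [hG, Fin.cons_zero]
  have hws : ∀ i : Fin m, (l • G x + (1 - l) • G y) i.succ = l * gg i x + (1 - l) * gg i y := by
    intro i; simp [hG, Fin.cons_succ]
  have hpos : 0 < g z + C := by
    have h0 := hwΛ.1
    rw [hw0] at h0
    have hm := main a θ
    rw [← hg x, ← hg y, ← hg z] at hm
    nlinarith
  have hneg : ∀ i, gg i z + C ≤ 0 := by
    intro i
    have h0 := hwΛ.2 i
    rw [hws i] at h0
    have hm := main (aa i) (θθ i)
    rw [← hgg i x, ← hgg i y, ← hgg i z] at hm
    linarith
  have hC : 0 ≤ C := by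
    have h1 : 0 ≤ (x - y) ⬝ᵥ (x - y) := Finset.sum_nonneg fun i _ => mul_self_nonneg _
    have h2 : 0 ≤ l * (1 - l) := mul_nonneg hl0 (by linarith)
    exact mul_nonneg h2 h1
  rcases eq_or_lt_of_le hC with hC0 | hCpos
  · exact key z (by linarith) (fun i => by have := hneg i; linarith)
  -- C > 0 case: in particular m ≥ 1
  rcases Nat.eq_zero_or_pos m with hn0 | hn
  · subst hn0
    have hxy : x = y := Subsingleton.elim x y
    rw [hCdef, hxy] at hCpos
    simp at hCpos
  -- obtain d with (aa i - a) ⬝ᵥ d = 1 for all i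
  obtain ⟨d, hd⟩ : ∃ d : Fin m → ℝ, ∀ i, (aa i - a) ⬝ᵥ d = 1 := by
    set A : Matrix (Fin m) (Fin m) ℝ := Matrix.of (fun i => aa i - a) with hA
    have hspan : Submodule.span ℝ (Set.range A) = ⊤ := by
      apply Submodule.eq_top_of_finrank_eq
      rw [Module.finrank_fin_fun]
      exact hrank
    have hsurjv : Function.Surjective A.vecMul := by
      intro w
      have hw : w ∈ LinearMap.range A.vecMulLinear := by
        rw [range_vecMulLinear]; change w ∈ Submodule.span ℝ (Set.range A); rw [hspan]; trivial
      obtain ⟨v, hv⟩ := hw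
      exact ⟨v, hv⟩
    have hU : IsUnit A := Matrix.vecMul_surjective_iff_isUnit.mp hsurjv
    obtain ⟨d, hd⟩ := Matrix.mulVec_surjective_iff_isUnit.mpr hU (fun _ => (1:ℝ))
    exact ⟨d, fun i => congr_fun hd i⟩
  have hdne : d ≠ 0 := by
    intro h
    have h1 := hd ⟨0, hn⟩
    rw [h] at h1
    simp at h1
  have hA0 : 0 < d ⬝ᵥ d := by
    rcases lt_or_eq_of_le (Finset.sum_nonneg fun i _ => mul_self_nonneg (d i) :
        (0:ℝ) ≤ d ⬝ᵥ d) with h | h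
    · exact h
    · exact absurd (dotProduct_self_eq_zero.mp h.symm) hdne
  set A0 : ℝ := d ⬝ᵥ d with hA0def
  set B : ℝ := 2 * ((z - a) ⬝ᵥ d) with hBdef
  set s : ℝ := Real.sqrt (B^2 + 4*A0*C) with hsdef
  have hs2 : s^2 = B^2 + 4*A0*C := Real.sq_sqrt (by nlinarith)
  have hsB : B ≤ s := by
    have h1 : |B| ≤ s := by
      rw [← Real.sqrt_sq_eq_abs, hsdef]
      exact Real.sqrt_le_sqrt (by nlinarith)
    exact le_trans (le_abs_self B) h1
  set t : ℝ := (s - B) / (2 * A0) with htdef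
  have ht0 : 0 ≤ t := div_nonneg (by linarith) (by linarith)
  have hφ : A0 * t^2 + B * t = C := by
    have h2A : (2 * A0) ≠ 0 := by positivity
    rw [htdef]
    field_simp
    linear_combination hs2
  set p : Fin m → ℝ := z + t • d with hp
  -- expansion of quadratics at p
  have ep : ∀ b : Fin m → ℝ, ∀ tc : ℝ,
      p ⬝ᵥ p - 2 * (b ⬝ᵥ p) + tc
        = (z ⬝ᵥ z - 2 * (b ⬝ᵥ z) + tc) + A0 * t^2 + 2*t*((z - b) ⬝ᵥ d) := by
    intro b tc
    rw [hp, hA0def]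
    simp only [dotProduct_add, add_dotProduct, dotProduct_smul, smul_dotProduct, smul_eq_mul,
      sub_dotProduct, dotProduct_comm d z]
    ring
  have hgp : 0 < g p := by
    have he := ep a θ
    rw [← hg p, ← hg z] at he
    have hB2 : 2*t*((z - a) ⬝ᵥ d) = B * t := by rw [hBdef]; ring
    rw [hB2] at he
    linarith
  have hggp : ∀ i, gg i p ≤ 0 := by
    intro i
    have he := ep (aa i) (θθ i)
    rw [← hgg i p, ← hgg i z] at he
    have hsplit : (z - aa i) ⬝ᵥ d = (z - a) ⬝ᵥ d - (aa i - a) ⬝ᵥ d := by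
      simp only [sub_dotProduct]; ring
    rw [hsplit, hd i] at he
    have h1 := hneg i
    nlinarith
  exact key p hgp hggp
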